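/- For every natural number k, the total number of vertices of the action graph A_k equals C_0 + C_1 + \cdots + C_k, the sum of the first k+1 Catalan numbers, and the total number of nontrivial edges of A_k equals (C_0 + C_1 + \cdots + C_k) - 1. -/

import Mathlib

/-- Vertices of action graphs: the root (labeled 0), or a vertex created at some
step, recorded together with its label and the path (head and tail of the vertex
sequence) that created it. -/
inductive AGVert : Type
  | root : AGVert
  | node (lbl : ℕ) (head : AGVert) (tail : List AGVert) : AGVert

/-- The label of a vertex. -/
def AGVert.label : AGVert → ℕ
  | .root => 0
  | .node l _ _ => l

/-- `IsPath E a l` says that `a :: l` is the vertex sequence of a directed path in a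
graph with edge set `E` (the trivial path at `a` when `l = []`). -/
def IsPath (E : Set (AGVert × AGVert)) (a : AGVert) (l : List AGVert) : Prop :=
  List.Chain (fun x y => (x, y) ∈ E) a l

/-- The terminal vertex of the path with vertex sequence `a :: l`. -/
def pathLast (a : AGVert) (l : List AGVert) : AGVert :=
  (a :: l).getLast (List.cons_ne_nil a l)

/-- The action graph `A k`, given by its set of vertices together with its set of
(nontrivial, directed) edges.  `A 0` has one vertex (labeled 0) and no nontrivial
edges; `A (k+1)` is obtained from `A k` by adjoining, for each directed path
(including trivial ones) in `A k` whose terminal vertex is labeled `k`, a new vertex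
labeled `k+1` and a new edge from the initial vertex of the path to the new vertex. -/
def actionGraph : ℕ → Set AGVert × Set (AGVert × AGVert)
  | 0 => ({AGVert.root}, ∅)
  | k + 1 =>
    let G := actionGraph k
    (G.1 ∪ { w | ∃ a l, a ∈ G.1 ∧ IsPath G.2 a l ∧ (pathLast a l).label = k ∧
        w = AGVert.node (k + 1) a l },
     G.2 ∪ { e | ∃ a l, a ∈ G.1 ∧ IsPath G.2 a l ∧ (pathLast a l).label = k ∧
        e = (a, AGVert.node (k + 1) a l) })

namespace AG

noncomputable instance : DecidableEq AGVert := Classical.decEq _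

def par : AGVert → AGVert
  | .root => .root
  | .node _ a _ => a

def anc : AGVert → List AGVert
  | .root => [.root]
  | .node j a l => anc a ++ [.node j a l]

def mkV (j : ℕ) : List AGVert → AGVert
  | [] => .root
  | a :: l => .node j a l

noncomputable def lev : ℕ → Finset AGVert
  | 0 => {AGVert.root}
  | j+1 => (lev j).biUnion fun v =>
      (Finset.range (anc v).length).image fun n => mkV (j+1) ((anc v).drop n)

lemma anc_ne_nil (v : AGVert) : anc v ≠ [] := by
  cases v <;> simp [anc]

lemma length_anc_pos (v : AGVert) : 0 < (anc v).length :=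
  List.length_pos_iff.2 (anc_ne_nil v)

lemma getLast_anc (v : AGVert) : (anc v).getLast (anc_ne_nil v) = v := by
  cases v with
  | root => simp [anc]
  | node j a l => simp [anc]

lemma anc_decomp : ∀ (v : AGVert) (n : ℕ), n < (anc v).length →
    ∃ a l, (anc v).drop n = a :: l ∧ anc a = (anc v).take (n+1) ∧ anc v = anc a ++ l
  | .root, n, hn => by
    simp [anc] at hn
    subst hn
    exact ⟨.root, [], by simp [anc]⟩
  | .node j b m, n, hn => by
    rcases lt_or_eq_of_le (Nat.lt_succ_iff.mp (by simpa [anc] using hn)) with h | h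
    · obtain ⟨a, l, h1, h2, h3⟩ := anc_decomp b n h
      refine ⟨a, l ++ [.node j b m], ?_, ?_, ?_⟩
      · rw [anc, List.drop_append_of_le_length h.le, h1]; simp
      · rw [anc, List.take_append_of_le_length h, h2]
      · rw [anc, h3]; simp [anc]
    · refine ⟨.node j b m, [], ?_, ?_, by simp⟩
      · rw [anc, h, List.drop_left]
      · rw [List.take_of_length_le (by simp [anc, h])]

lemma getLast?_anc (v : AGVert) : (anc v).getLast? = some v := by
  rw [List.getLast?_eq_getLast (anc_ne_nil v), getLast_anc]

lemma getLast_drop_anc (v : AGVert) (n : ℕ) (h : (anc v).drop n ≠ []) :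
    ((anc v).drop n).getLast h = v := by
  obtain ⟨pre, hpre⟩ := List.drop_suffix n (anc v)
  have h1 : ((anc v).drop n).getLast? = some v := by
    rw [← List.getLast?_append_of_ne_nil (l₁ := pre) h, hpre, getLast?_anc]
  rw [List.getLast?_eq_getLast h] at h1
  exact Option.some_injective _ h1

lemma mem_lev_succ {j : ℕ} {w : AGVert} :
    w ∈ lev (j+1) ↔ ∃ v ∈ lev j, ∃ n < (anc v).length, w = mkV (j+1) ((anc v).drop n) := by
  simp [lev, eq_comm]

/-- data about a freshly created vertex -/
lemma mkV_spec (j : ℕ) {v : AGVert} {n : ℕ} (hn : n < (anc v).length) :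
    ∃ a l, (anc v).drop n = a :: l ∧ mkV j ((anc v).drop n) = .node j a l ∧
      anc (mkV j ((anc v).drop n)) = (anc v).take (n+1) ++ [mkV j ((anc v).drop n)] ∧
      (anc (mkV j ((anc v).drop n))).length = n + 2 := by
  obtain ⟨a, l, h1, h2, h3⟩ := anc_decomp v n hn
  refine ⟨a, l, h1, by rw [h1]; rfl, ?_, ?_⟩
  · rw [h1]; show anc (.node j a l) = _ ++ [mkV j (a :: l)]; rw [anc, h2]; rfl
  · rw [h1]; show (anc (.node j a l)).length = _
    rw [anc, h2]
    simp [Nat.min_eq_left (Nat.succ_le_of_lt hn)]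

lemma label_lev : ∀ {j : ℕ} {v : AGVert}, v ∈ lev j → v.label = j := by
  intro j
  cases j with
  | zero => intro v hv; simp [lev] at hv; subst hv; rfl
  | succ j =>
    intro w hw
    obtain ⟨v, _, n, hn, rfl⟩ := mem_lev_succ.mp hw
    obtain ⟨a, l, h1, h2, -⟩ := mkV_spec (j+1) hn
    rw [h2]; rfl

lemma length_anc_lev : ∀ {j : ℕ} {v : AGVert}, v ∈ lev j → (anc v).length ≤ j + 1 := by
  intro j
  induction j with
  | zero => intro v hv; simp [lev] at hv; subst hv; simp [anc]
  | succ j ih =>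
    intro w hw
    obtain ⟨v, hv, n, hn, rfl⟩ := mem_lev_succ.mp hw
    obtain ⟨a, l, -, -, -, h4⟩ := mkV_spec (j+1) hn
    rw [h4]
    have := ih hv
    omega

lemma anc_mem_lev : ∀ {j : ℕ} {v : AGVert}, v ∈ lev j → ∀ u ∈ anc v, ∃ i ≤ j, u ∈ lev i := by
  intro j
  induction j with
  | zero =>
    intro v hv u hu
    simp [lev] at hv; subst hv
    simp [anc] at hu; subst hu
    exact ⟨0, le_refl 0, by simp [lev]⟩
  | succ j ih =>
    intro w hw u hu
    obtain ⟨v, hv, n, hn, rfl⟩ := mem_lev_succ.mp hw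
    obtain ⟨a, l, -, -, h3, -⟩ := mkV_spec (j+1) hn
    rw [h3, List.mem_append] at hu
    rcases hu with hu | hu
    · have : u ∈ anc v := List.mem_of_mem_take hu
      obtain ⟨i, hi, hu'⟩ := ih hv u this
      exact ⟨i, by omega, hu'⟩
    · simp at hu; subst hu
      exact ⟨j+1, le_refl _, hw⟩

lemma lev_ne_root {j : ℕ} {w : AGVert} (hw : w ∈ lev (j+1)) : w ≠ .root := by
  obtain ⟨v, hv, n, hn, rfl⟩ := mem_lev_succ.mp hw
  obtain ⟨a, l, -, h2, -⟩ := mkV_spec (j+1) hn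
  rw [h2]
  exact fun h => AGVert.noConfusion h

lemma chain'_anc : ∀ (v : AGVert),
    List.Chain' (fun x y => y ≠ AGVert.root ∧ par y = x) (anc v)
  | .root => by simp [anc, List.Chain']
  | .node j b m => by
    rw [anc]
    apply List.IsChain.append (chain'_anc b) (by simp)
    intro x hx y hy
    simp at hy
    subst hy
    refine ⟨fun h => AGVert.noConfusion h, ?_⟩
    rw [List.getLast?_eq_getLast (anc_ne_nil b), getLast_anc] at hx
    simp at hx
    subst hx
    rfl


/-! ### counting -/

noncomputable def S (j : ℕ) (v : AGVert) : Finset AGVert :=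
  (Finset.range (anc v).length).image fun n => mkV j ((anc v).drop n)

lemma lev_succ (j : ℕ) : lev (j+1) = (lev j).biUnion (S (j+1)) := rfl

lemma drop_anc_ne_nil {v : AGVert} {n : ℕ} (hn : n < (anc v).length) :
    (anc v).drop n ≠ [] := by
  intro h
  have := congrArg List.length h
  simp at this
  omega

lemma mem_S {j : ℕ} {v w : AGVert} :
    w ∈ S j v ↔ ∃ n < (anc v).length, w = mkV j ((anc v).drop n) := by
  simp [S, eq_comm]

lemma mkV_inj {j : ℕ} {s t : List AGVert} (hs : s ≠ []) (ht : t ≠ [])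
    (h : mkV j s = mkV j t) : s = t := by
  cases s with
  | nil => exact absurd rfl hs
  | cons a l =>
    cases t with
    | nil => exact absurd rfl ht
    | cons b m =>
      simp [mkV] at h
      simp [h.1, h.2]

lemma mkV_drop_inj {j : ℕ} {v : AGVert} :
    Set.InjOn (fun n => mkV j ((anc v).drop n)) (Finset.range (anc v).length) := by
  intro n hn n' hn' h
  simp at hn hn'
  have h2 := mkV_inj (drop_anc_ne_nil hn) (drop_anc_ne_nil hn') h
  have := congrArg List.length h2
  simp at this
  omega

lemma card_S (j : ℕ) (v : AGVert) : (S j v).card = (anc v).length := by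
  rw [S, Finset.card_image_of_injOn mkV_drop_inj, Finset.card_range]

lemma eq_of_mem_S {j : ℕ} {v v' w : AGVert} (h : w ∈ S j v) (h' : w ∈ S j v') : v = v' := by
  obtain ⟨n, hn, rfl⟩ := mem_S.mp h
  obtain ⟨n', hn', he⟩ := mem_S.mp h'
  have h2 := mkV_inj (drop_anc_ne_nil hn) (drop_anc_ne_nil hn') he
  calc v = ((anc v).drop n).getLast (drop_anc_ne_nil hn) := (getLast_drop_anc v n _).symm
    _ = ((anc v').drop n').getLast (drop_anc_ne_nil hn') := by
        congr 1
    _ = v' := getLast_drop_anc v' n' _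

lemma length_anc_of_mem_S {j : ℕ} {v w : AGVert} (h : w ∈ S j v) :
    ∃ n < (anc v).length, (anc w).length = n + 2 := by
  obtain ⟨n, hn, rfl⟩ := mem_S.mp h
  obtain ⟨a, l, -, -, -, h4⟩ := mkV_spec j hn
  exact ⟨n, hn, h4⟩

/-- fiber counts -/
noncomputable def Bc (j d : ℕ) : ℕ :=
  ((lev j).filter fun v => (anc v).length = d + 1).card

lemma Bc_zero_zero : Bc 0 0 = 1 := by
  rw [Bc]
  have : (lev 0).filter (fun v => (anc v).length = 0 + 1) = lev 0 := by
    apply Finset.filter_true_of_mem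
    intro v hv
    simp [lev] at hv
    subst hv
    simp [anc]
  rw [this]
  simp [lev]

lemma Bc_zero_succ (d : ℕ) : Bc 0 (d+1) = 0 := by
  rw [Bc, Finset.card_eq_zero, Finset.filter_eq_empty_iff]
  intro v hv
  simp [lev] at hv
  subst hv
  simp [anc]

lemma Bc_succ_zero (j : ℕ) : Bc (j+1) 0 = 0 := by
  rw [Bc, Finset.card_eq_zero, Finset.filter_eq_empty_iff]
  intro w hw
  obtain ⟨v, hv, n, hn, rfl⟩ := mem_lev_succ.mp hw
  obtain ⟨a, l, -, -, -, h4⟩ := mkV_spec (j+1) hn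
  omega

lemma card_S_filter (j : ℕ) (v : AGVert) (e : ℕ) :
    ((S j v).filter fun w => (anc w).length = e + 2).card
      = if e < (anc v).length then 1 else 0 := by
  classical
  rw [S, Finset.filter_image]
  rw [Finset.card_image_of_injOn (mkV_drop_inj.mono (Finset.filter_subset _ _))]
  have : ((Finset.range (anc v).length).filter
        fun n => (anc (mkV j ((anc v).drop n))).length = e + 2)
      = (Finset.range (anc v).length).filter fun n => n = e := by
    apply Finset.filter_congr
    intro n hn
    simp only [Finset.mem_range] at hn
    obtain ⟨a, l, -, -, -, h4⟩ := mkV_spec j hn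
    rw [h4]
    constructor <;> (intro h; omega)
  rw [this, Finset.filter_eq']
  split_ifs with h1 h2 h3 <;> simp_all

lemma disjoint_S (j : ℕ) {v v' : AGVert} (h : v ≠ v') : Disjoint (S j v) (S j v') := by
  rw [Finset.disjoint_left]
  intro w hw hw'
  exact h (eq_of_mem_S hw hw')

lemma Bc_succ_succ (j e : ℕ) :
    Bc (j+1) (e+1) = ∑ d' ∈ Finset.Icc e j, Bc j d' := by
  classical
  have lhs : Bc (j+1) (e+1)
      = ∑ v ∈ lev j, ((S (j+1) v).filter fun w => (anc w).length = e + 2).card := by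
    rw [Bc, lev_succ, Finset.filter_biUnion]
    exact Finset.card_biUnion fun v hv v' hv' hne =>
      Finset.disjoint_filter_filter (disjoint_S (j+1) hne)
  rw [lhs]
  have step : ∀ v ∈ lev j,
      ((S (j+1) v).filter fun w => (anc w).length = e + 2).card
        = if e < (anc v).length then 1 else 0 := fun v _ => card_S_filter (j+1) v e
  rw [Finset.sum_congr rfl step]
  have hb : (∑ v ∈ lev j, if e < (anc v).length then 1 else 0)
      = ((lev j).filter fun v => e < (anc v).length).card := by
    rw [Finset.card_filter]
  rw [hb]
  -- now: card of (lev j).filter (e < len anc) = ∑ d' in Icc e j, Bc j d'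
  rw [Finset.card_eq_sum_card_fiberwise
    (f := fun v => (anc v).length - 1) (t := Finset.Icc e j) ?_]
  · apply Finset.sum_congr rfl
    intro d' hd'
    simp only [Finset.mem_Icc] at hd'
    rw [Bc]
    congr 1
    rw [Finset.filter_filter]
    apply Finset.filter_congr
    intro v hv
    have h1 := length_anc_pos v
    constructor
    · rintro ⟨h2, h3⟩; omega
    · intro h2; omega
  · intro v hv
    simp only [Finset.mem_coe, Finset.mem_filter] at hv
    have := length_anc_lev hv.1
    simp only [Finset.mem_coe, Finset.mem_Icc]
    omega

lemma Bc_eq_zero {j d : ℕ} (h : j < d) : Bc j d = 0 := by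
  rw [Bc, Finset.card_eq_zero, Finset.filter_eq_empty_iff]
  intro v hv
  have := length_anc_lev hv
  omega


/-! ### arithmetic: Bc sums give Catalan numbers -/

lemma catalan_succ_range (n : ℕ) :
    catalan (n + 1) = ∑ i ∈ Finset.range (n + 1), catalan i * catalan (n - i) := by
  rw [catalan_succ]
  exact (Finset.sum_range (fun i => catalan i * catalan (n - i))).symm

lemma double_reindex (N : ℕ) (g : ℕ → ℕ → ℕ) :
    ∑ i ∈ Finset.range (N+1), ∑ s ∈ Finset.range (N-i+1), g i s
      = ∑ p ∈ Finset.range (N+1), ∑ i ∈ Finset.range (p+1), g i (p-i) := by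
  have l := Finset.sum_sigma (Finset.range (N+1)) (fun i => Finset.range (N-i+1))
    (fun x : (_ : ℕ) × ℕ => g x.1 x.2)
  have r := Finset.sum_sigma (Finset.range (N+1)) (fun p => Finset.range (p+1))
    (fun x : (_ : ℕ) × ℕ => g x.2 (x.1 - x.2))
  rw [← l, ← r]
  refine Finset.sum_nbij' (i := fun x => ⟨x.1 + x.2, x.1⟩) (j := fun x => ⟨x.2, x.1 - x.2⟩)
    ?_ ?_ ?_ ?_ ?_
  · rintro ⟨a, b⟩ h
    simp only [Finset.mem_sigma, Finset.mem_range] at h ⊢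
    omega
  · rintro ⟨a, b⟩ h
    simp only [Finset.mem_sigma, Finset.mem_range] at h ⊢
    omega
  · rintro ⟨a, b⟩ h
    simp only [Finset.mem_sigma, Finset.mem_range] at h
    have hab : a + b - a = b := by omega
    simp [hab]
  · rintro ⟨a, b⟩ h
    simp only [Finset.mem_sigma, Finset.mem_range] at h
    have hab : b + (a - b) = a := by omega
    simp [hab]
  · rintro ⟨a, b⟩ h
    simp only [Finset.mem_sigma, Finset.mem_range] at h
    simp only [Nat.add_sub_cancel_left]

lemma claimA : ∀ j, ∀ e, Bc (j+1) (e+1)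
    = ∑ i ∈ Finset.range (j+1), catalan i * Bc (j-i) e := by
  intro j
  induction j using Nat.strong_induction_on with
  | _ j IH =>
    intro e
    match j with
    | 0 =>
      rw [Bc_succ_succ]
      rcases Nat.eq_zero_or_pos e with rfl | he
      · simp [Bc_zero_zero]
      · rw [Finset.Icc_eq_empty (by omega)]
        obtain ⟨e', rfl⟩ := Nat.exists_eq_add_of_le he
        simp [Nat.add_comm 1 e', Bc_zero_succ]
    | (m+1) =>
      rcases le_or_gt e (m+1) with he | he
      swap
      · rw [Bc_succ_succ, Finset.Icc_eq_empty (by omega), Finset.sum_empty]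
        symm
        apply Finset.sum_eq_zero
        intro i hi
        simp only [Finset.mem_range] at hi
        rw [Bc_eq_zero (by omega), mul_zero]
      rw [Bc_succ_succ]
      have hins : Finset.Icc e (m+1) = insert e (Finset.Icc (e+1) (m+1)) := by
        ext x
        simp only [Finset.mem_Icc, Finset.mem_insert]
        omega
      rw [hins, Finset.sum_insert (by simp)]
      have hmap : Finset.Icc (e+1) (m+1) = (Finset.Icc e m).map (addRightEmbedding 1) := by
        rw [Finset.map_add_right_Icc]
      rw [hmap, Finset.sum_map]
      simp only [addRightEmbedding_apply]
      have h1 : ∀ f ∈ Finset.Icc e m, Bc (m+1) (f+1)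
          = ∑ i ∈ Finset.range (m+1), catalan i * Bc (m-i) f :=
        fun f _ => IH m (Nat.lt_succ_self m) f
      rw [Finset.sum_congr rfl h1, Finset.sum_comm]
      have h2 : ∀ i ∈ Finset.range (m+1),
          (∑ f ∈ Finset.Icc e m, catalan i * Bc (m-i) f)
            = catalan i * Bc (m-i+1) (e+1) := by
        intro i hi
        simp only [Finset.mem_range] at hi
        rw [← Finset.mul_sum]
        congr 1
        rw [Bc_succ_succ]
        symm
        apply Finset.sum_subset
        · apply Finset.Icc_subset_Icc_right; omega
        · intro x hx hx'
          simp only [Finset.mem_Icc] at hx hx'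
          exact Bc_eq_zero (by omega)
      rw [Finset.sum_congr rfl h2]
      have h3 : ∀ i ∈ Finset.range (m+1),
          catalan i * Bc (m-i+1) (e+1)
            = ∑ s ∈ Finset.range (m-i+1), catalan i * (catalan s * Bc (m-i-s) e) := by
        intro i hi
        rw [IH (m-i) (by omega) e, Finset.mul_sum]
      rw [Finset.sum_congr rfl h3, double_reindex]
      have h35 : ∀ p ∈ Finset.range (m+1), ∀ i ∈ Finset.range (p+1),
          catalan i * (catalan (p-i) * Bc (m-i-(p-i)) e)
            = catalan i * (catalan (p-i) * Bc (m-p) e) := by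
        intro p hp i hi
        simp only [Finset.mem_range] at hp hi
        congr 3
        omega
      rw [Finset.sum_congr rfl (fun p hp => Finset.sum_congr rfl (h35 p hp))]
      have h4 : ∀ p ∈ Finset.range (m+1),
          (∑ i ∈ Finset.range (p+1), catalan i * (catalan (p-i) * Bc (m-p) e))
            = catalan (p+1) * Bc (m-p) e := by
        intro p hp
        rw [catalan_succ_range, Finset.sum_mul]
        apply Finset.sum_congr rfl
        intro i hi
        ring
      rw [Finset.sum_congr rfl h4]
      rw [Finset.sum_range_succ' (fun i => catalan i * Bc (m+1-i) e) (m+1)]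
      simp only [catalan_zero, one_mul, Nat.sub_zero]
      rw [add_comm]
      congr 1
      apply Finset.sum_congr rfl
      intro p hp
      simp only [Finset.mem_range] at hp
      congr 2
      omega

lemma card_lev (j : ℕ) : (lev j).card = ∑ d ∈ Finset.range (j+1), Bc j d := by
  rw [Finset.card_eq_sum_card_fiberwise
    (f := fun v => (anc v).length - 1) (t := Finset.range (j+1)) ?_]
  · apply Finset.sum_congr rfl
    intro d hd
    rw [Bc]
    congr 1
    apply Finset.filter_congr
    intro v hv
    have := length_anc_pos v
    constructor <;> (intro; omega)
  · intro v hv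
    have := length_anc_lev hv
    have := length_anc_pos v
    simp only [Finset.mem_coe, Finset.mem_range]
    omega

lemma card_lev_eq_catalan : ∀ j, (lev j).card = catalan j := by
  intro j
  induction j using Nat.strong_induction_on with
  | _ j IH =>
    match j with
    | 0 => simp [lev]
    | (m+1) =>
      rw [card_lev]
      rw [Finset.sum_range_succ' (fun d => Bc (m+1) d) (m+1)]
      rw [Bc_succ_zero, add_zero]
      have h1 : ∀ e ∈ Finset.range (m+1), Bc (m+1) (e+1)
          = ∑ i ∈ Finset.range (m+1), catalan i * Bc (m-i) e := fun e _ => claimA m e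
      rw [Finset.sum_congr rfl h1, Finset.sum_comm]
      have h2 : ∀ i ∈ Finset.range (m+1),
          (∑ e ∈ Finset.range (m+1), catalan i * Bc (m-i) e)
            = catalan i * catalan (m-i) := by
        intro i hi
        simp only [Finset.mem_range] at hi
        rw [← Finset.mul_sum]
        congr 1
        rw [← IH (m-i) (by omega), card_lev]
        symm
        apply Finset.sum_subset
        · apply Finset.range_subset_range.2; omega
        · intro x hx hx'
          simp only [Finset.mem_range] at hx hx'
          exact Bc_eq_zero (by omega)
      rw [Finset.sum_congr rfl h2, ← catalan_succ_range]


/-! ### connecting actionGraph to lev -/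

lemma lev_eq_of_mem {i j : ℕ} {v : AGVert} (hi : v ∈ lev i) (hj : v ∈ lev j) : i = j := by
  rw [← label_lev hi, ← label_lev hj]

lemma dropLast_anc (v : AGVert) : (anc v).dropLast ++ [v] = anc v := by
  conv_rhs => rw [← List.dropLast_append_getLast (anc_ne_nil v)]
  rw [getLast_anc]

theorem GI : ∀ k, (actionGraph k).1 = ↑((Finset.range (k+1)).biUnion lev) ∧
    (actionGraph k).2 = {p : AGVert × AGVert |
      ∃ w, (w ∈ (actionGraph k).1 ∧ w ≠ AGVert.root) ∧ p = (par w, w)} := by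
  intro k
  induction k with
  | zero =>
    constructor
    · show ({AGVert.root} : Set AGVert) = _
      ext w
      simp [lev]
    · show (∅ : Set (AGVert × AGVert)) = _
      ext p
      simp only [Set.mem_empty_iff_false, Set.mem_setOf_eq, false_iff]
      rintro ⟨w, ⟨hw, hw'⟩, -⟩
      simp only [show (actionGraph 0).1 = {AGVert.root} from rfl, Set.mem_singleton_iff] at hw
      exact hw' hw
  | succ k ih =>
    obtain ⟨h1, h2⟩ := ih
    have hmem : ∀ v, v ∈ (actionGraph k).1 ↔ ∃ i ≤ k, v ∈ lev i := by
      intro v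
      rw [h1]
      simp [Nat.lt_succ_iff]
    have hEdge : ∀ x y : AGVert, (x, y) ∈ (actionGraph k).2 →
        y ≠ AGVert.root ∧ par y = x ∧ y ∈ (actionGraph k).1 := by
      intro x y hxy
      rw [h2] at hxy
      obtain ⟨w, ⟨hw1, hw2⟩, hw3⟩ := hxy
      obtain ⟨rfl, rfl⟩ := Prod.mk.injEq .. ▸ hw3
      exact ⟨hw2, rfl, hw1⟩
    -- every ancestor chain is a chain of edges
    have hchain : ∀ {j : ℕ}, j ≤ k → ∀ {v : AGVert}, v ∈ lev j →
        List.Chain' (fun x y => (x, y) ∈ (actionGraph k).2) (anc v) := by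
      intro j hj v hv
      rw [List.Chain', List.isChain_iff_getElem]
      intro i hi
      have hc := List.isChain_iff_getElem.mp (chain'_anc v) i hi
      obtain ⟨hne, hpar⟩ := hc
      set y := (anc v)[i+1] with hy
      have hymem : y ∈ anc v := List.getElem_mem _
      obtain ⟨i', hi', hy'⟩ := anc_mem_lev hv y hymem
      rw [h2]
      exact ⟨y, ⟨(hmem y).mpr ⟨i', le_trans hi' hj, hy'⟩, hne⟩, by rw [hpar]⟩
    -- paths are suffixes of ancestor chains
    have hsuffix : ∀ (l : List AGVert) (a : AGVert), IsPath (actionGraph k).2 a l →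
        (a :: l) <:+ anc (pathLast a l) := by
      intro l
      induction l with
      | nil =>
        intro a _
        refine ⟨(anc a).dropLast, ?_⟩
        show (anc a).dropLast ++ [a] = anc (pathLast a [])
        rw [dropLast_anc]
        rfl
      | cons b t ihl =>
        intro a hp
        simp only [IsPath, List.Chain, List.isChain_cons_cons] at hp
        obtain ⟨hab, hbt⟩ := hp
        have hlast : pathLast a (b :: t) = pathLast b t := by
          rw [pathLast, pathLast]
          exact List.getLast_cons_cons
        rw [hlast]
        obtain ⟨pre, hpre⟩ := ihl b hbt
        have hlen : pre.length < (anc (pathLast b t)).length := by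
          rw [← hpre]
          simp
        obtain ⟨a₀, l₀, hd1, hd2, hd3⟩ := anc_decomp (pathLast b t) pre.length hlen
        have hd1' : b :: t = a₀ :: l₀ := by
          rw [← List.drop_left (l₁ := pre) (l₂ := b :: t), hpre]
          exact hd1
        injection hd1' with e1 e2
        subst e1
        subst e2
        obtain ⟨hbne, hbpar, -⟩ := hEdge a b hab
        have hancb : anc b = anc a ++ [b] := by
          cases b with
          | root => exact absurd rfl hbne
          | node j' a' l'' =>
            rw [anc]
            have : a' = a := hbpar
            rw [this]
        refine ⟨(anc a).dropLast, ?_⟩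
        rw [hd3, hancb, ← dropLast_anc a]
        simp
    -- targets of edges are vertices
    have hPathMem : ∀ (l : List AGVert) (a : AGVert), IsPath (actionGraph k).2 a l →
        ∀ x ∈ l, ∃ y, (y, x) ∈ (actionGraph k).2 := by
      intro l
      induction l with
      | nil => intro a _ x hx; exact absurd hx List.not_mem_nil
      | cons b t ihl =>
        intro a hp x hx
        simp only [IsPath, List.Chain, List.isChain_cons_cons] at hp
        rcases List.mem_cons.mp hx with rfl | hx'
        · exact ⟨a, hp.1⟩
        · exact ihl b hp.2 x hx'
    -- the key characterization of paths ending at a vertex labeled k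
    have hkey : ∀ (a : AGVert) (l : List AGVert),
        (a ∈ (actionGraph k).1 ∧ IsPath (actionGraph k).2 a l ∧ (pathLast a l).label = k)
          ↔ ∃ v ∈ lev k, ∃ n < (anc v).length, a :: l = (anc v).drop n := by
      intro a l
      constructor
      · rintro ⟨ha, hp, hl⟩
        have hVmem : pathLast a l ∈ (actionGraph k).1 := by
          rcases eq_or_ne l [] with rfl | hl0
          · exact ha
          · have hVl : pathLast a l ∈ l := by
              rw [pathLast, List.getLast_cons hl0]
              exact List.getLast_mem hl0
            obtain ⟨y, hy⟩ := hPathMem l a hp _ hVl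
            exact (hEdge y _ hy).2.2
        obtain ⟨i, hik, hVi⟩ := (hmem _).mp hVmem
        have hik' : i = k := by rw [← label_lev hVi, hl]
        subst hik'
        obtain ⟨pre, hpre⟩ := hsuffix l a hp
        refine ⟨pathLast a l, hVi, pre.length, ?_, ?_⟩
        · rw [← hpre]; simp
        · rw [← hpre, List.drop_left]
      · rintro ⟨v, hv, n, hn, heq⟩
        have hsub : ∀ x ∈ a :: l, x ∈ anc v := by
          intro x hx
          rw [heq] at hx
          exact List.drop_subset n (anc v) hx
        have hVlast : pathLast a l = v := by
          have h' : (anc v).drop n ≠ [] := drop_anc_ne_nil hn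
          have h1 : ((anc v).drop n).getLast? = some v := by
            rw [List.getLast?_eq_getLast h', getLast_drop_anc]
          rw [← heq, List.getLast?_eq_getLast (List.cons_ne_nil a l)] at h1
          exact Option.some_injective _ h1
        refine ⟨?_, ?_, ?_⟩
        · obtain ⟨i, hi, ha'⟩ := anc_mem_lev hv a (hsub a (by simp))
          exact (hmem a).mpr ⟨i, hi, ha'⟩
        · have hc : List.Chain' (fun x y => (x, y) ∈ (actionGraph k).2) ((anc v).drop n) :=
            List.IsChain.drop (hchain le_rfl hv) n
          rw [← heq] at hc
          exact hc
        · rw [hVlast]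
          exact label_lev hv
    -- the new vertices are exactly lev (k+1)
    have hnewV : { w | ∃ a l, a ∈ (actionGraph k).1 ∧ IsPath (actionGraph k).2 a l ∧
        (pathLast a l).label = k ∧ w = AGVert.node (k + 1) a l } = ↑(lev (k+1)) := by
      ext w
      simp only [Set.mem_setOf_eq, Finset.coe_sort_coe, Finset.mem_coe]
      rw [mem_lev_succ]
      constructor
      · rintro ⟨a, l, ha, hp, hl, rfl⟩
        obtain ⟨v, hv, n, hn, heq⟩ := (hkey a l).mp ⟨ha, hp, hl⟩
        exact ⟨v, hv, n, hn, by rw [← heq]; rfl⟩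
      · rintro ⟨v, hv, n, hn, rfl⟩
        obtain ⟨a, l, hd, hmk, -, -⟩ := mkV_spec (k+1) hn
        obtain ⟨ha, hp, hl⟩ := (hkey a l).mpr ⟨v, hv, n, hn, hd.symm⟩
        exact ⟨a, l, ha, hp, hl, hmk⟩
    -- the new edges
    have hnewE : { e | ∃ a l, a ∈ (actionGraph k).1 ∧ IsPath (actionGraph k).2 a l ∧
        (pathLast a l).label = k ∧ e = (a, AGVert.node (k + 1) a l) }
          = {p : AGVert × AGVert | ∃ w, w ∈ lev (k+1) ∧ p = (par w, w)} := by
      ext e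
      simp only [Set.mem_setOf_eq]
      constructor
      · rintro ⟨a, l, ha, hp, hl, rfl⟩
        obtain ⟨v, hv, n, hn, heq⟩ := (hkey a l).mp ⟨ha, hp, hl⟩
        refine ⟨AGVert.node (k+1) a l, ?_, rfl⟩
        rw [mem_lev_succ]
        exact ⟨v, hv, n, hn, by rw [← heq]; rfl⟩
      · rintro ⟨w, hw, rfl⟩
        obtain ⟨v, hv, n, hn, rfl⟩ := mem_lev_succ.mp hw
        obtain ⟨a, l, hd, hmk, -, -⟩ := mkV_spec (k+1) hn
        obtain ⟨ha, hp, hl⟩ := (hkey a l).mpr ⟨v, hv, n, hn, hd.symm⟩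
        refine ⟨a, l, ha, hp, hl, ?_⟩
        rw [hmk]
        rfl
    constructor
    · show (actionGraph k).1 ∪ _ = _
      rw [hnewV, h1]
      have : Finset.range (k+1+1) = insert (k+1) (Finset.range (k+1)) := by
        rw [Finset.range_add_one]
      rw [this, Finset.biUnion_insert, Finset.coe_union]
      rw [Set.union_comm]
    · show (actionGraph k).2 ∪ _ = _
      rw [hnewE, h2]
      have hV1 : (actionGraph (k+1)).1 = (actionGraph k).1 ∪ ↑(lev (k+1)) := by
        show (actionGraph k).1 ∪ _ = _
        rw [hnewV]
      rw [hV1]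
      ext p
      simp only [Set.mem_union, Set.mem_setOf_eq]
      constructor
      · rintro (⟨w, ⟨hw1, hw2⟩, rfl⟩ | ⟨w, hw, rfl⟩)
        · exact ⟨w, ⟨Or.inl hw1, hw2⟩, rfl⟩
        · exact ⟨w, ⟨Or.inr (by exact_mod_cast hw), lev_ne_root hw⟩, rfl⟩
      · rintro ⟨w, ⟨hw1 | hw1, hw2⟩, rfl⟩
        · exact Or.inl ⟨w, ⟨hw1, hw2⟩, rfl⟩
        · exact Or.inr ⟨w, by exact_mod_cast hw1, rfl⟩


lemma card_biUnion_lev (k : ℕ) :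
    ((Finset.range (k+1)).biUnion lev).card = ∑ i ∈ Finset.range (k+1), catalan i := by
  rw [Finset.card_biUnion]
  · exact Finset.sum_congr rfl fun i _ => card_lev_eq_catalan i
  · intro i _ j _ hij
    rw [Function.onFun, Finset.disjoint_left]
    intro v hvi hvj
    exact hij (lev_eq_of_mem hvi hvj)

lemma root_mem (k : ℕ) : AGVert.root ∈ (actionGraph k).1 := by
  rw [(GI k).1]
  simp only [Finset.coe_biUnion, Finset.coe_range, Set.mem_iUnion]
  exact ⟨0, by simp, by simp [lev]⟩

end AG



/-- The total number of vertices of `A k` is `C 0 + C 1 + ⋯ + C k`, and the total number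
of nontrivial edges of `A k` is `(C 0 + C 1 + ⋯ + C k) - 1`. -/
theorem stmt_8 (k : ℕ) :
    (actionGraph k).1.ncard = ∑ i ∈ Finset.range (k + 1), catalan i ∧
    (actionGraph k).2.ncard = (∑ i ∈ Finset.range (k + 1), catalan i) - 1 := by
  have hv : (actionGraph k).1.ncard = ∑ i ∈ Finset.range (k + 1), catalan i := by
    rw [(AG.GI k).1, Set.ncard_coe_finset, AG.card_biUnion_lev]
  refine ⟨hv, ?_⟩
  have himg : (actionGraph k).2
      = (fun w => (AG.par w, w)) '' ((actionGraph k).1 \ {AGVert.root}) := by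
    rw [(AG.GI k).2]
    ext p
    simp only [Set.mem_setOf_eq, Set.mem_image, Set.mem_diff, Set.mem_singleton_iff]
    constructor
    · rintro ⟨w, ⟨h1, h2⟩, rfl⟩
      exact ⟨w, ⟨h1, h2⟩, rfl⟩
    · rintro ⟨w, ⟨h1, h2⟩, rfl⟩
      exact ⟨w, ⟨h1, h2⟩, rfl⟩
  rw [himg]
  have hfin : (actionGraph k).1.Finite := by
    rw [(AG.GI k).1]
    exact Finset.finite_toSet _
  rw [Set.ncard_image_of_injOn (fun w _ w' _ h => congrArg Prod.snd h)]
  rw [Set.ncard_diff_singleton_of_mem (AG.root_mem k), hv]
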